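/- The second GKZ operator of V_{(2,29)} lies in the left ideal generated by the Picard–Fuchs operators: for every smooth function f of two variables, δ2^3 f + z2·((3δ1+3δ2+1)(3δ1+3δ2+2)(3δ1+3δ2+3) f) = (δ1+δ2)(P2 f) − P1 f, where P1 = δ1^3 + z1(3δ1+3δ2+1)(3δ1+3δ2+2)(3δ1+3δ2+3) and P2 = (δ1^2 − δ1δ2 + δ2^2) + 3(z1+z2)(3δ1+3δ2+1)(3δ1+3δ2+2). Hence the GKZ ideal is contained in the ideal generated by P1 and P2, so the Picard–Fuchs module is a quotient of the GKZ module. -/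

import Mathlib

/-- The logarithmic derivative `δ1 = z1 ∂/∂z1`. -/
noncomputable def del1 (f : ℂ × ℂ → ℂ) : ℂ × ℂ → ℂ :=
  fun p => p.1 * fderiv ℂ f p (1, 0)

/-- The logarithmic derivative `δ2 = z2 ∂/∂z2`. -/
noncomputable def del2 (f : ℂ × ℂ → ℂ) : ℂ × ℂ → ℂ :=
  fun p => p.2 * fderiv ℂ f p (0, 1)

/-- The first-order operator `3δ1 + 3δ2 + c`. -/
noncomputable def Mop (c : ℂ) (f : ℂ × ℂ → ℂ) : ℂ × ℂ → ℂ :=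
  fun p => 3 * del1 f p + 3 * del2 f p + c * f p

/-- The first (unrescaled) Picard-Fuchs operator of `V_{(2,29)}`:
`P1 = δ1^3 + z1 (3δ1+3δ2+1)(3δ1+3δ2+2)(3δ1+3δ2+3)`. -/
noncomputable def P1op (f : ℂ × ℂ → ℂ) : ℂ × ℂ → ℂ :=
  fun p => del1 (del1 (del1 f)) p + p.1 * Mop 1 (Mop 2 (Mop 3 f)) p

/-- The second (unrescaled) Picard-Fuchs operator of `V_{(2,29)}`:
`P2 = (δ1^2 - δ1 δ2 + δ2^2) + 3(z1+z2)(3δ1+3δ2+1)(3δ1+3δ2+2)`. -/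
noncomputable def P2op (f : ℂ × ℂ → ℂ) : ℂ × ℂ → ℂ :=
  fun p => (del1 (del1 f) p - del1 (del2 f) p + del2 (del2 f) p)
    + 3 * (p.1 + p.2) * Mop 1 (Mop 2 f) p

/-- The second GKZ operator of `V_{(2,29)}`:
`δ2^3 + z2 (3δ1+3δ2+1)(3δ1+3δ2+2)(3δ1+3δ2+3)`. -/
noncomputable def GKZ2op (f : ℂ × ℂ → ℂ) : ℂ × ℂ → ℂ :=
  fun p => del2 (del2 (del2 f)) p + p.2 * Mop 1 (Mop 2 (Mop 3 f)) p

section Aux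

variable {f g : ℂ × ℂ → ℂ} {c d : ℂ}

lemma smooth_dfapp (hf : ContDiff ℂ ⊤ f) (v : ℂ × ℂ) :
    ContDiff ℂ ⊤ (fun p => fderiv ℂ f p v) :=
  (hf.fderiv_right (by simp)).clm_apply contDiff_const

lemma smooth_del1 (hf : ContDiff ℂ ⊤ f) : ContDiff ℂ ⊤ (del1 f) :=
  contDiff_fst.mul (smooth_dfapp hf _)

lemma smooth_del2 (hf : ContDiff ℂ ⊤ f) : ContDiff ℂ ⊤ (del2 f) :=
  contDiff_snd.mul (smooth_dfapp hf _)

lemma smooth_Mop (hf : ContDiff ℂ ⊤ f) : ContDiff ℂ ⊤ (Mop c f) :=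
  ((contDiff_const.mul (smooth_del1 hf)).add (contDiff_const.mul (smooth_del2 hf))).add
    (contDiff_const.mul hf)

lemma fderiv_fst_mul (hg : ContDiff ℂ ⊤ g) (p v : ℂ × ℂ) :
    fderiv ℂ (fun q => q.1 * g q) p v = v.1 * g p + p.1 * fderiv ℂ g p v := by
  rw [fderiv_fun_mul differentiableAt_fst (hg.differentiable (by simp) p)]
  simp [fderiv_fst]; ring

lemma fderiv_snd_mul (hg : ContDiff ℂ ⊤ g) (p v : ℂ × ℂ) :
    fderiv ℂ (fun q => q.2 * g q) p v = v.2 * g p + p.2 * fderiv ℂ g p v := by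
  rw [fderiv_fun_mul differentiableAt_snd (hg.differentiable (by simp) p)]
  simp [fderiv_snd]; ring

lemma fderiv_symm (hf : ContDiff ℂ ⊤ f) (p v w : ℂ × ℂ) :
    fderiv ℂ (fun q => fderiv ℂ f q v) p w = fderiv ℂ (fun q => fderiv ℂ f q w) p v := by
  have hd : DifferentiableAt ℂ (fderiv ℂ f) p :=
    ((hf.fderiv_right (m := ⊤) (le_top)).differentiable (by simp)) p
  have h1 : ∀ u : ℂ × ℂ, fderiv ℂ (fun q => fderiv ℂ f q u) p
      = (fderiv ℂ (fderiv ℂ f) p).flip u := by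
    intro u
    rw [fderiv_clm_apply hd (differentiableAt_const u)]
    simp
  rw [h1 v, h1 w]
  exact ((hf.contDiffAt.of_le le_top : ContDiffAt ℂ 2 f p).isSymmSndFDerivAt (by simp)).eq w v

-- linearity
lemma del1_add (hf : ContDiff ℂ ⊤ f) (hg : ContDiff ℂ ⊤ g) :
    del1 (fun p => f p + g p) = fun p => del1 f p + del1 g p := by
  funext p
  simp only [del1]
  rw [fderiv_fun_add (hf.differentiable (by simp) p) (hg.differentiable (by simp) p)]
  simp; ring

lemma del2_add (hf : ContDiff ℂ ⊤ f) (hg : ContDiff ℂ ⊤ g) :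
    del2 (fun p => f p + g p) = fun p => del2 f p + del2 g p := by
  funext p
  simp only [del2]
  rw [fderiv_fun_add (hf.differentiable (by simp) p) (hg.differentiable (by simp) p)]
  simp; ring

lemma del1_sub (hf : ContDiff ℂ ⊤ f) (hg : ContDiff ℂ ⊤ g) :
    del1 (fun p => f p - g p) = fun p => del1 f p - del1 g p := by
  funext p
  simp only [del1]
  rw [fderiv_fun_sub (hf.differentiable (by simp) p) (hg.differentiable (by simp) p)]
  simp; ring

lemma del2_sub (hf : ContDiff ℂ ⊤ f) (hg : ContDiff ℂ ⊤ g) :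
    del2 (fun p => f p - g p) = fun p => del2 f p - del2 g p := by
  funext p
  simp only [del2]
  rw [fderiv_fun_sub (hf.differentiable (by simp) p) (hg.differentiable (by simp) p)]
  simp; ring

lemma del1_cmul (c : ℂ) (hf : ContDiff ℂ ⊤ f) :
    del1 (fun p => c * f p) = fun p => c * del1 f p := by
  funext p
  simp only [del1]
  rw [fderiv_const_mul (hf.differentiable (by simp) p) c]
  simp; ring

lemma del2_cmul (c : ℂ) (hf : ContDiff ℂ ⊤ f) :
    del2 (fun p => c * f p) = fun p => c * del2 f p := by
  funext p
  simp only [del2]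
  rw [fderiv_const_mul (hf.differentiable (by simp) p) c]
  simp; ring

-- coordinate multiplication
lemma del1_z1 (hg : ContDiff ℂ ⊤ g) :
    del1 (fun p => p.1 * g p) = fun p => p.1 * g p + p.1 * del1 g p := by
  funext p; simp only [del1]; rw [fderiv_fst_mul hg]; simp [del1]; ring

lemma del2_z1 (hg : ContDiff ℂ ⊤ g) :
    del2 (fun p => p.1 * g p) = fun p => p.1 * del2 g p := by
  funext p; simp only [del2]; rw [fderiv_fst_mul hg]; simp [del2]; ring

lemma del1_z2 (hg : ContDiff ℂ ⊤ g) :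
    del1 (fun p => p.2 * g p) = fun p => p.2 * del1 g p := by
  funext p; simp only [del1]; rw [fderiv_snd_mul hg]; simp [del1]; ring

lemma del2_z2 (hg : ContDiff ℂ ⊤ g) :
    del2 (fun p => p.2 * g p) = fun p => p.2 * g p + p.2 * del2 g p := by
  funext p; simp only [del2]; rw [fderiv_snd_mul hg]; simp [del2]; ring

-- commutativity
lemma del_comm (hf : ContDiff ℂ ⊤ f) : del1 (del2 f) = del2 (del1 f) := by
  funext p
  have h2 : del2 f = fun q => q.2 * fderiv ℂ f q (0, 1) := rfl
  have h1 : del1 f = fun q => q.1 * fderiv ℂ f q (1, 0) := rfl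
  simp only [del1, del2, h1, h2]
  rw [fderiv_snd_mul (smooth_dfapp hf _), fderiv_fst_mul (smooth_dfapp hf _)]
  rw [fderiv_symm hf p (0,1) (1,0)]
  simp; ring

lemma del1_Mop (hf : ContDiff ℂ ⊤ f) : del1 (Mop c f) = Mop c (del1 f) := by
  have h : Mop c f = fun p => (fun q => 3 * del1 f q + 3 * del2 f q) p + (fun q => c * f q) p := rfl
  rw [h, del1_add ((contDiff_const.mul (smooth_del1 hf)).add (contDiff_const.mul (smooth_del2 hf)))
        (contDiff_const.mul hf),
      del1_add (contDiff_const.mul (smooth_del1 hf)) (contDiff_const.mul (smooth_del2 hf)),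
      del1_cmul 3 (smooth_del1 hf), del1_cmul 3 (smooth_del2 hf), del1_cmul c hf,
      del_comm hf]
  funext p; simp only [Mop]

lemma del2_Mop (hf : ContDiff ℂ ⊤ f) : del2 (Mop c f) = Mop c (del2 f) := by
  have h : Mop c f = fun p => (fun q => 3 * del1 f q + 3 * del2 f q) p + (fun q => c * f q) p := rfl
  rw [h, del2_add ((contDiff_const.mul (smooth_del1 hf)).add (contDiff_const.mul (smooth_del2 hf)))
        (contDiff_const.mul hf),
      del2_add (contDiff_const.mul (smooth_del1 hf)) (contDiff_const.mul (smooth_del2 hf)),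
      del2_cmul 3 (smooth_del1 hf), del2_cmul 3 (smooth_del2 hf), del2_cmul c hf,
      ← del_comm hf]
  funext p; simp only [Mop]

lemma Mop_comm (hf : ContDiff ℂ ⊤ f) : Mop c (Mop d f) = Mop d (Mop c f) := by
  have h : ∀ e e' : ℂ, Mop e (Mop e' f)
      = fun p => 3 * del1 (Mop e' f) p + 3 * del2 (Mop e' f) p + e * Mop e' f p := fun _ _ => rfl
  rw [h c d, h d c, del1_Mop hf, del2_Mop hf, del1_Mop hf, del2_Mop hf]
  funext p
  simp only [Mop]
  rw [del_comm hf]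
  ring


end Aux

/-- The second GKZ operator of `V_{(2,29)}` lies in the left ideal generated by the
Picard-Fuchs operators: applied to any smooth function `f`, it agrees with
`(δ1+δ2)(P2 f) - P1 f`. -/
theorem V229_GKZ_in_PicardFuchs_ideal (f : ℂ × ℂ → ℂ) (hf : ContDiff ℂ ⊤ f) :
    GKZ2op f = fun p => del1 (P2op f) p + del2 (P2op f) p - P1op f p := by
  have hg2 : ContDiff ℂ ⊤ (Mop 1 (Mop 2 f)) := smooth_Mop (smooth_Mop hf)
  have h11 := smooth_del1 (smooth_del1 hf)
  have h12 := smooth_del1 (smooth_del2 hf)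
  have h22 := smooth_del2 (smooth_del2 hf)
  have hA : ContDiff ℂ ⊤ (fun q => del1 (del1 f) q - del1 (del2 f) q + del2 (del2 f) q) :=
    (h11.sub h12).add h22
  have hB : ContDiff ℂ ⊤ (fun q : ℂ × ℂ => q.1 * (3 * Mop 1 (Mop 2 f) q)) :=
    contDiff_fst.mul (contDiff_const.mul hg2)
  have hC : ContDiff ℂ ⊤ (fun q : ℂ × ℂ => q.2 * (3 * Mop 1 (Mop 2 f) q)) :=
    contDiff_snd.mul (contDiff_const.mul hg2)
  have hsplit : P2op f = fun p =>
      (del1 (del1 f) p - del1 (del2 f) p + del2 (del2 f) p)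
      + (p.1 * (3 * Mop 1 (Mop 2 f) p) + p.2 * (3 * Mop 1 (Mop 2 f) p)) := by
    funext p; simp only [P2op]; ring
  have hg3 : Mop 1 (Mop 2 (Mop 3 f)) = Mop 3 (Mop 1 (Mop 2 f)) := by
    rw [show Mop 2 (Mop 3 f) = Mop 3 (Mop 2 f) from Mop_comm hf]
    exact Mop_comm (smooth_Mop hf)
  have hunf : Mop 3 (Mop 1 (Mop 2 f)) = fun p =>
      3 * del1 (Mop 1 (Mop 2 f)) p + 3 * del2 (Mop 1 (Mop 2 f)) p
      + 3 * Mop 1 (Mop 2 f) p := rfl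
  have eA1 : del1 (fun q => del1 (del1 f) q - del1 (del2 f) q + del2 (del2 f) q)
      = fun p => del1 (del1 (del1 f)) p - del1 (del1 (del2 f)) p + del1 (del2 (del2 f)) p := by
    rw [del1_add (h11.sub h12) h22, del1_sub h11 h12]
  have eA2 : del2 (fun q => del1 (del1 f) q - del1 (del2 f) q + del2 (del2 f) q)
      = fun p => del2 (del1 (del1 f)) p - del2 (del1 (del2 f)) p + del2 (del2 (del2 f)) p := by
    rw [del2_add (h11.sub h12) h22, del2_sub h11 h12]
  have eB1 : del1 (fun q : ℂ × ℂ => q.1 * (3 * Mop 1 (Mop 2 f) q))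
      = fun p => p.1 * (3 * Mop 1 (Mop 2 f) p) + p.1 * (3 * del1 (Mop 1 (Mop 2 f)) p) := by
    rw [del1_z1 (contDiff_const.mul hg2), del1_cmul 3 hg2]
  have eB2 : del2 (fun q : ℂ × ℂ => q.1 * (3 * Mop 1 (Mop 2 f) q))
      = fun p => p.1 * (3 * del2 (Mop 1 (Mop 2 f)) p) := by
    rw [del2_z1 (contDiff_const.mul hg2), del2_cmul 3 hg2]
  have eC1 : del1 (fun q : ℂ × ℂ => q.2 * (3 * Mop 1 (Mop 2 f) q))
      = fun p => p.2 * (3 * del1 (Mop 1 (Mop 2 f)) p) := by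
    rw [del1_z2 (contDiff_const.mul hg2), del1_cmul 3 hg2]
  have eC2 : del2 (fun q : ℂ × ℂ => q.2 * (3 * Mop 1 (Mop 2 f) q))
      = fun p => p.2 * (3 * Mop 1 (Mop 2 f) p) + p.2 * (3 * del2 (Mop 1 (Mop 2 f)) p) := by
    rw [del2_z2 (contDiff_const.mul hg2), del2_cmul 3 hg2]
  have e1 : del1 (P2op f) = fun p =>
      (del1 (del1 (del1 f)) p - del1 (del1 (del2 f)) p + del1 (del2 (del2 f)) p)
      + ((p.1 * (3 * Mop 1 (Mop 2 f) p) + p.1 * (3 * del1 (Mop 1 (Mop 2 f)) p))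
        + p.2 * (3 * del1 (Mop 1 (Mop 2 f)) p)) := by
    rw [hsplit, del1_add hA (hB.add hC), del1_add hB hC, eA1, eB1, eC1]
  have e2 : del2 (P2op f) = fun p =>
      (del2 (del1 (del1 f)) p - del2 (del1 (del2 f)) p + del2 (del2 (del2 f)) p)
      + (p.1 * (3 * del2 (Mop 1 (Mop 2 f)) p)
        + (p.2 * (3 * Mop 1 (Mop 2 f) p) + p.2 * (3 * del2 (Mop 1 (Mop 2 f)) p))) := by
    rw [hsplit, del2_add hA (hB.add hC), del2_add hB hC, eA2, eB2, eC2]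
  funext p
  simp only [GKZ2op, P1op, e1, e2, hg3, hunf]
  rw [show del1 (del1 (del2 f)) = del2 (del1 (del1 f)) by
        rw [show del1 (del2 f) = del2 (del1 f) from del_comm hf, del_comm (smooth_del1 hf)],
      show del1 (del2 (del2 f)) = del2 (del2 (del1 f)) by
        rw [del_comm (smooth_del2 hf), show del1 (del2 f) = del2 (del1 f) from del_comm hf],
      show del2 (del1 (del2 f)) = del2 (del2 (del1 f)) by
        rw [show del1 (del2 f) = del2 (del1 f) from del_comm hf]]
  ring
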